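/- Let r be an integer with r ≡ -1, -2, or 3 (mod 9) and r ≡ 2, 1, or -2 (mod 7), and set m = 16r - 2, n = m - 3, k = 7, l = 10. Then: (1) m and l are even while n and k are odd, and m - l = n - k; (2) 2 divides both C(m, m-l+1) and C(n, n-k+1), but 4 divides neither; (3) C(n, n-k+1) divides C(m, m-l+1). -/
import Mathlib

lemma aux720 (s : ℕ) : 720 * Nat.choose (16*s+11) 6 =
    (16*s+11)*(16*s+10)*(16*s+9)*(16*s+8)*(16*s+7)*(16*s+6) := by
  have h6 : 6 ≤ 16*s+11 := by omega
  have hfac := Nat.choose_mul_factorial_mul_factorial h6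
  have hsub : 16*s+11 - 6 = 16*s+5 := by omega
  rw [hsub] at hfac
  have exp : Nat.factorial (16*s+11)
      = (16*s+11)*(16*s+10)*(16*s+9)*(16*s+8)*(16*s+7)*(16*s+6) * Nat.factorial (16*s+5) := by
    rw [show 16*s+11 = 16*s+5+1+1+1+1+1+1 by ring]
    simp [Nat.factorial_succ]
    ring
  rw [exp] at hfac
  have hpos : 0 < Nat.factorial (16*s+5) := Nat.factorial_pos _
  have : Nat.choose (16*s+11) 6 * 720 * Nat.factorial (16*s+5)
      = (16*s+11)*(16*s+10)*(16*s+9)*(16*s+8)*(16*s+7)*(16*s+6) * Nat.factorial (16*s+5) := by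
    calc Nat.choose (16*s+11) 6 * 720 * Nat.factorial (16*s+5)
        = Nat.choose (16*s+11) 6 * Nat.factorial 6 * Nat.factorial (16*s+5) := by
          norm_num [Nat.factorial]
      _ = _ := hfac
  have := Nat.eq_of_mul_eq_mul_right hpos this
  linarith

lemma chain (n : ℕ) : 504 * Nat.choose (n+3) 9 = (n+3)*((n+2)*((n+1) * Nat.choose n 6)) := by
  have e1 := Nat.add_one_mul_choose_eq n 6
  have e2 := Nat.add_one_mul_choose_eq (n+1) 7
  have e3 := Nat.add_one_mul_choose_eq (n+2) 8
  simp only [Nat.succ_eq_add_one, show n+1+1 = n+2 from rfl, show n+2+1 = n+3 from rfl,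
    show 6+1=7 from rfl, show 7+1=8 from rfl, show 8+1=9 from rfl] at e1 e2 e3
  zify at e1 e2 e3 ⊢
  linear_combination (-((n:ℤ)+3))*((n:ℤ)+2)*e1 - 7*((n:ℤ)+3)*e2 - 56*e3

/-- `C(16s+11, 6) ≡ 2 (mod 4)`. -/
lemma mod4_N6 (s : ℕ) : Nat.choose (16*s+11) 6 % 4 = 2 := by
  set N := Nat.choose (16*s+11) 6 with hN
  have key : 45 * N = 2 * ((16*s+11)*(8*s+5)*(16*s+9)*(2*s+1)*(16*s+7)*(8*s+3)) := by
    have h := aux720 s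
    have : 16 * (45 * N) = 16 * (2 * ((16*s+11)*(8*s+5)*(16*s+9)*(2*s+1)*(16*s+7)*(8*s+3))) := by
      calc 16 * (45 * N) = 720 * N := by ring
        _ = (16*s+11)*(16*s+10)*(16*s+9)*(16*s+8)*(16*s+7)*(16*s+6) := h
        _ = _ := by ring
    omega
  set W := (16*s+11)*(8*s+5)*(16*s+9)*(2*s+1)*(16*s+7)*(8*s+3) with hW
  have hWodd : Odd W := by
    refine (((((Odd.mul ?_ ?_).mul ?_).mul ?_).mul ?_).mul ?_)
    exacts [⟨8*s+5, by ring⟩, ⟨4*s+2, by ring⟩, ⟨8*s+4, by ring⟩, ⟨s, by ring⟩,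
      ⟨8*s+3, by ring⟩, ⟨4*s+1, by ring⟩]
  obtain ⟨t, ht⟩ := hWodd
  omega

/-- For a positive integer `r` with `r ≡ -1, -2, 3 (mod 9)` and
`r ≡ 2, 1, -2 (mod 7)`, setting `m = 16r - 2`, `n = m - 3`, `k = 7`, `l = 10`:
(1) `m, l` are even, `n, k` are odd, and `m - l = n - k`;
(2) 2 divides both `C(m, m-l+1)` and `C(n, n-k+1)`, but 4 divides neither;
(3) `C(n, n-k+1)` divides `C(m, m-l+1)`. -/
theorem statement3 (r : ℕ) (hr : 1 ≤ r)
    (h9 : r % 9 = 8 ∨ r % 9 = 7 ∨ r % 9 = 3)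
    (h7 : r % 7 = 2 ∨ r % 7 = 1 ∨ r % 7 = 5)
    (m n k l : ℕ) (hm : m = 16 * r - 2) (hn : n = m - 3) (hk : k = 7) (hl : l = 10) :
    (Even m ∧ Even l ∧ Odd n ∧ Odd k ∧ m - l = n - k) ∧
    (2 ∣ Nat.choose m (m - l + 1) ∧ 2 ∣ Nat.choose n (n - k + 1) ∧
      ¬ 4 ∣ Nat.choose m (m - l + 1) ∧ ¬ 4 ∣ Nat.choose n (n - k + 1)) ∧
    Nat.choose n (n - k + 1) ∣ Nat.choose m (m - l + 1) := by
  obtain ⟨s, rfl⟩ : ∃ s, r = s + 1 := ⟨r - 1, by omega⟩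
  have hm' : m = 16*s + 14 := by omega
  have hn' : n = 16*s + 11 := by omega
  subst hm' hn' hk hl
  have hidx_m : 16*s+14 - 10 + 1 = 16*s+5 := by omega
  have hidx_n : 16*s+11 - 7 + 1 = 16*s+5 := by omega
  rw [hidx_m, hidx_n]
  -- symmetry of binomial coefficients
  have hsymm_m : Nat.choose (16*s+14) (16*s+5) = Nat.choose (16*s+14) 9 := by
    rw [show 16*s+5 = 16*s+14 - 9 by omega]
    exact Nat.choose_symm (by omega)
  have hsymm_n : Nat.choose (16*s+11) (16*s+5) = Nat.choose (16*s+11) 6 := by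
    rw [show 16*s+5 = 16*s+11 - 6 by omega]
    exact Nat.choose_symm (by omega)
  rw [hsymm_m, hsymm_n]
  set N6 := Nat.choose (16*s+11) 6 with hN6
  set N9 := Nat.choose (16*s+14) 9 with hN9
  have hchain : 504 * N9 = (16*s+14)*(16*s+13)*(16*s+12) * N6 := by
    have h := chain (16*s+11)
    rw [show 16*s+11+3 = 16*s+14 from rfl, show 16*s+11+2 = 16*s+13 from rfl,
      show 16*s+11+1 = 16*s+12 from rfl] at h
    rw [h]; ring
  have hN6mod : N6 % 4 = 2 := mod4_N6 s
  -- N9 mod 4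
  have hN9mod : N9 % 4 = 2 := by
    have hkey : 63 * N9 = (8*s+7)*(16*s+13)*(4*s+3) * N6 := by
      have : 8 * (63 * N9) = 8 * ((8*s+7)*(16*s+13)*(4*s+3) * N6) := by
        calc 8 * (63 * N9) = 504 * N9 := by ring
          _ = (16*s+14)*(16*s+13)*(16*s+12) * N6 := hchain
          _ = _ := by ring
      omega
    have hVodd : Odd ((8*s+7)*(16*s+13)*(4*s+3)) := by
      refine (Odd.mul ?_ ?_).mul ?_
      exacts [⟨4*s+3, by ring⟩, ⟨8*s+6, by ring⟩, ⟨2*s+1, by ring⟩]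
    obtain ⟨t, ht⟩ := hVodd
    obtain ⟨a, ha⟩ : ∃ a, N6 = 4*a+2 := ⟨N6/4, by omega⟩
    rw [ht, ha] at hkey
    have hodd : (2*t+1) * (4*a+2) = 2*(2*(2*t*a+t+a)+1) := by ring
    rw [hodd] at hkey
    omega
  -- divisibility
  have hdvd504 : 504 ∣ (16*s+14)*(16*s+13)*(16*s+12) := by
    obtain ⟨u, hu⟩ : ∃ u, u = s % 63 := ⟨_, rfl⟩
    have hu9 : u % 9 = s % 9 := by omega
    have hu7 : u % 7 = s % 7 := by omega
    have hcases : u = 43 ∨ u = 7 ∨ u = 25 ∨ u = 15 ∨ u = 42 ∨ u = 60 ∨ u = 29 ∨ u = 56 ∨ u = 11 := by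
      omega
    have c1 : (16*s+14) ≡ (16*u+14) [MOD 504] := by unfold Nat.ModEq; omega
    have c2 : (16*s+13) ≡ (16*u+13) [MOD 504] := by unfold Nat.ModEq; omega
    have c3 : (16*s+12) ≡ (16*u+12) [MOD 504] := by unfold Nat.ModEq; omega
    have cprod := (c1.mul c2).mul c3
    have hzero : (16*u+14)*(16*u+13)*(16*u+12) % 504 = 0 := by
      rcases hcases with rfl|rfl|rfl|rfl|rfl|rfl|rfl|rfl|rfl <;> norm_num
    have : (16*s+14)*(16*s+13)*(16*s+12) % 504 = 0 := by
      unfold Nat.ModEq at cprod; omega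
    exact Nat.dvd_of_mod_eq_zero this
  obtain ⟨q, hq⟩ := hdvd504
  have hdvd : N6 ∣ N9 := by
    refine ⟨q, ?_⟩
    have : 504 * N9 = 504 * (N6 * q) := by
      rw [hchain, hq]; ring
    omega
  refine ⟨⟨⟨8*s+7, by ring⟩, ⟨5, rfl⟩, ⟨8*s+5, by ring⟩, ⟨3, by norm_num⟩, by omega⟩,
    ⟨by omega, by omega, by omega, by omega⟩, hdvd⟩
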